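/- For every real α with 1/2 ≤ α ≤ 1, the tuple (a,b,c,d,e,f) = (√(3/(2(1+α))), √(2(1+α)/3), α·√(3/(2(1+α))), √(2(1+α)/3), 0, 0) is a general configuration for α, its double bubble perimeter 2(a+b+c+f)+(d+e) equals 2√(6(1+α)), and every general configuration for α has double bubble perimeter at least 2√(6(1+α)). -/

import Mathlib

set_option maxHeartbeats 1000000

theorem dbLeafIa (A B a b C s : ℝ) (hA : 0<A) (hB : 0<B) (hA2B : A ≤ 2*B)
    (ha:0<a)(hb:0<b)(hC:0≤C)(hs:0<s)(hsb:s≤b)(hab:a*b=A)(harea:B ≤ C*s) :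
    24*(A+B) ≤ (2*a+2*b+2*C+s)^2 := by
  rcases le_total (b^2) (2*B) with hcase | hcase
  · have h1 : 2*B/b + b ≤ 2*C + s := by
      rw [div_add' _ _ _ (ne_of_gt hb), div_le_iff₀ hb]
      nlinarith [mul_nonneg (sub_nonneg.2 hsb) (sub_nonneg.2 (show s*b ≤ 2*B by nlinarith)),
        mul_pos hs hb]
    have h2 : 24*(A+B) ≤ (2*a + 2*b + (2*B/b + b))^2 := by
      have hba : 2*a = 2*A/b := by field_simp [hab.symm]; linear_combination hab
      rw [hba]
      have : 2*A/b + 2*b + (2*B/b + b) = (2*(A+B) + 3*b^2)/b := by field_simp; ring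
      rw [this, div_pow, le_div_iff₀ (by positivity)]
      nlinarith [sq_nonneg (2*(A+B) - 3*b^2)]
    refine h2.trans (pow_le_pow_left₀ (by positivity) (by linarith) 2)
  · set w := Real.sqrt (2*B) with hw
    have hw0 : 0 < w := Real.sqrt_pos.2 (by linarith)
    have hw2 : w^2 = 2*B := Real.sq_sqrt (by linarith)
    have hbw : w ≤ b := by nlinarith [hw2, hcase, hb, hw0]
    have h1 : 2*w ≤ 2*C + s := by nlinarith [sq_nonneg (s-w), hs, harea]
    have h2 : 2*A/w + 2*w ≤ 2*a + 2*b := by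
      have hba : a = A/b := by field_simp [hab.symm]; linear_combination hab
      rw [hba, ← sub_nonneg]
      have : 2*(A/b) + 2*b - (2*A/w + 2*w) = 2*((b-w)*(b*w - A))/(b*w) := by field_simp; ring
      rw [this]
      apply div_nonneg _ (by positivity)
      have : A ≤ b*w := by nlinarith
      nlinarith [this, hbw]
    have h3 : 24*(A+B) ≤ (2*A/w + 2*w + 2*w)^2 := by
      have : 2*A/w + 2*w + 2*w = (2*A + 4*w^2)/w := by field_simp; ring
      rw [this, div_pow, le_div_iff₀ (by positivity)]
      nlinarith [sq_nonneg (A - 2*B), hw2]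
    refine h3.trans (pow_le_pow_left₀ (by positivity) (by linarith) 2)

theorem dbLeafIb (A B a b C s : ℝ) (hA : 0<A) (hB : 0<B) (hB2A : B ≤ 2*A)
    (ha:0<a)(hb:0<b)(hC:0≤C)(hs:0<s)(hbs:b ≤ s)(hab:a*b=A)(harea:B ≤ C*s) :
    24*(A+B) ≤ (2*a+b+2*C+2*s)^2 := by
  rcases le_total (B) (b^2) with hcase | hcase
  · have h1 : 2*B/b + 2*b ≤ 2*C + 2*s := by
      rw [div_add' _ _ _ (ne_of_gt hb), div_le_iff₀ hb]
      nlinarith [mul_nonneg (sub_nonneg.2 hbs) (sub_nonneg.2 (show B ≤ s*b by nlinarith)),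
        mul_pos hs hb, mul_nonneg (sub_nonneg.2 hbs) (sub_nonneg.2 hcase)]
    have h2 : 24*(A+B) ≤ (2*a + b + (2*B/b + 2*b))^2 := by
      have hba : 2*a = 2*A/b := by field_simp [hab.symm]; linear_combination hab
      rw [hba]
      have : 2*A/b + b + (2*B/b + 2*b) = (2*(A+B) + 3*b^2)/b := by field_simp; ring
      rw [this, div_pow, le_div_iff₀ (by positivity)]
      nlinarith [sq_nonneg (2*(A+B) - 3*b^2)]
    refine h2.trans (pow_le_pow_left₀ (by positivity) (by linarith) 2)
  · set v := Real.sqrt B with hv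
    have hv0 : 0 < v := Real.sqrt_pos.2 hB
    have hv2 : v^2 = B := Real.sq_sqrt hB.le
    have hbv : b ≤ v := by nlinarith
    have h1 : 4*v ≤ 2*C + 2*s := by nlinarith [sq_nonneg (s-v), hs, harea]
    have h2 : 2*A/v + v ≤ 2*a + b := by
      have hba : a = A/b := by field_simp [hab.symm]; linear_combination hab
      rw [hba, ← sub_nonneg]
      have : 2*(A/b) + b - (2*A/v + v) = ((v-b)*(2*A - b*v))/(b*v) := by field_simp; ring
      rw [this]
      apply div_nonneg _ (by positivity)
      have : b*v ≤ 2*A := by nlinarith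
      nlinarith [this, hbv]
    have h3 : 24*(A+B) ≤ (2*A/v + v + 4*v)^2 := by
      have : 2*A/v + v + 4*v = (2*A + 5*v^2)/v := by field_simp; ring
      rw [this, div_pow, le_div_iff₀ (by positivity)]
      nlinarith [sq_nonneg (2*A - B), hv2]
    refine h3.trans (pow_le_pow_left₀ (by positivity) (by linarith) 2)

theorem dbLeafIIa (A B a b f : ℝ) (hA : 0<A) (hB : 0<B) (hA2B : A ≤ 2*B)
    (ha:0<a)(hb:0<b)(hf:0<f)(hab:a*b=A)(haf:B ≤ a*f) :
    24*(A+B) ≤ (2*a+2*b+2*f+B/f)^2 := by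
  rcases le_total (a^2) (2*B) with hcase | hcase
  · have h1 : 2*B/a + a ≤ 2*f + B/f := by
      rw [div_add' _ _ _ (ne_of_gt ha), ← sub_nonneg]
      have hfa : B/a ≤ f := by rw [div_le_iff₀ ha]; nlinarith
      have : 2*f + B/f - (2*B + a*a)/a = ((f - B/a)*(2*f*(B/a) - B))/(f*(B/a)) := by
        field_simp; ring
      rw [this]
      apply div_nonneg _ (by positivity)
      apply mul_nonneg (by linarith)
      have h2f : a ≤ 2*f := by
        rw [div_le_iff₀ ha] at hfa; nlinarith
      have : 2*f*(B/a) - B = B*(2*f-a)/a := by field_simp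
      rw [this]; exact div_nonneg (mul_nonneg hB.le (by linarith)) ha.le
    have h2 : 24*(A+B) ≤ (2*a + 2*b + (2*B/a + a))^2 := by
      have hba : 2*b = 2*A/a := by field_simp [hab.symm]; linear_combination hab
      rw [hba]
      have : 2*a + 2*A/a + (2*B/a + a) = (2*(A+B) + 3*a^2)/a := by field_simp; ring
      rw [this, div_pow, le_div_iff₀ (by positivity)]
      nlinarith [sq_nonneg (2*(A+B) - 3*a^2)]
    refine h2.trans (pow_le_pow_left₀ (by positivity) (by linarith) 2)
  · set w := Real.sqrt (2*B) with hw
    have hw0 : 0 < w := Real.sqrt_pos.2 (by linarith)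
    have hw2 : w^2 = 2*B := Real.sq_sqrt (by linarith)
    have haw : w ≤ a := by nlinarith
    have h1 : 2*w ≤ 2*f + B/f := by
      rw [← sub_nonneg]
      have : 2*f + B/f - 2*w = (2*(f - w/2)^2 + (B - w^2/2))/f := by field_simp; ring
      rw [this]
      apply div_nonneg _ hf.le
      nlinarith [sq_nonneg (f - w/2)]
    have h2 : 2*A/w + 2*w ≤ 2*a + 2*b := by
      have hba : b = A/a := by field_simp [hab.symm]; linear_combination hab
      rw [hba, ← sub_nonneg]
      have : 2*a + 2*(A/a) - (2*A/w + 2*w) = 2*((a-w)*(a*w - A))/(a*w) := by field_simp; ring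
      rw [this]
      apply div_nonneg _ (by positivity)
      have : A ≤ a*w := by nlinarith
      nlinarith [this, haw]
    have h3 : 24*(A+B) ≤ (2*A/w + 2*w + 2*w)^2 := by
      have : 2*A/w + 2*w + 2*w = (2*A + 4*w^2)/w := by field_simp; ring
      rw [this, div_pow, le_div_iff₀ (by positivity)]
      nlinarith [sq_nonneg (A - 2*B), hw2]
    refine h3.trans (pow_le_pow_left₀ (by positivity) (by linarith) 2)

theorem dbQlem (a b t : ℝ) (ha : 0<a) (hb : 0<b) (ht : 0≤t) (hcon : t^2+2*a*t ≤ 4*(a*b)) :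
    0 ≤ 9*a^2+4*b^2-3*t^2+12*b*t-12*a*b-6*a*t := by
  rcases le_total t a with hta | hat
  · nlinarith [sq_nonneg (2*b+3*t-3*a), mul_nonneg ht (sub_nonneg.2 hta)]
  · have hb' : (t^2+2*a*t)/(4*a) ≤ b := by rw [div_le_iff₀ (by positivity)]; nlinarith
    nlinarith [sq_nonneg (2*b+3*t-3*a), mul_nonneg (sub_nonneg.2 hb') (sub_nonneg.2 hat),
      sq_nonneg (t-a), sq_nonneg (t+a), mul_pos ha hb, mul_nonneg ht (sub_nonneg.2 hat),
      mul_nonneg (mul_nonneg ht ht) (sub_nonneg.2 hat), sq_nonneg (t^2+8*a*t-6*a^2),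
      mul_nonneg (sub_nonneg.2 hb') ht, mul_nonneg (sub_nonneg.2 hb') ha.le]

theorem dbSubIIb2 (A B a b f w : ℝ) (hA:0<A) (hB:0<B) (hB2A:B≤2*A)
    (ha:0<a) (hb:0<b) (hf:0≤f) (hw:0≤w) (hfw:f≤w) (hab:a*b=A) (hw2:w^2=2*B-2*a*f) :
    24*(A+B) ≤ (3*a+2*b+f+2*w)^2 := by
  rcases le_total w (2*a) with hcase | hcase
  · set t := Real.sqrt (a^2+2*B) - a with htdef
    have hx : (Real.sqrt (a^2+2*B))^2 = a^2+2*B := Real.sq_sqrt (by positivity)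
    have hta : a ≤ Real.sqrt (a^2+2*B) := by
      have h := Real.sqrt_le_sqrt (show a^2 ≤ a^2+2*B by linarith)
      rwa [Real.sqrt_sq ha.le] at h
    have ht0 : 0 ≤ t := by simp only [htdef]; linarith
    have ht2 : t^2 + 2*a*t = 2*B := by simp only [htdef]; linear_combination hx
    have htw : t ≤ w := by
      nlinarith [ht2, hw2, mul_le_mul_of_nonneg_left hfw ha.le,
        (show (0:ℝ) < w + t + 2*a by linarith)]
    have hchain : 3*t ≤ f + 2*w := by
      nlinarith [ht2, hw2, ha,
        mul_nonneg (sub_nonneg.2 htw) (show (0:ℝ) ≤ 4*a-(w+t) by linarith)]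
    have hQ := dbQlem a b t ha hb ht0 (by nlinarith [ht2, hab])
    have h24 : 24*(A+B) ≤ (3*a+2*b+3*t)^2 := by nlinarith [hQ, ht2, hab]
    refine h24.trans (pow_le_pow_left₀ (by linarith) (by linarith) 2)
  · set v := Real.sqrt (2*B) with hvdef
    have hv0 : 0 < v := Real.sqrt_pos.2 (by linarith)
    have hv2 : v^2 = 2*B := Real.sq_sqrt (by linarith)
    have hwv : w ≤ v := by nlinarith [mul_nonneg ha.le hf]
    have hchain : 2*v ≤ f + 2*w := by
      nlinarith [hv2, hw2, ha,
        mul_nonneg (sub_nonneg.2 hwv) (show (0:ℝ) ≤ (v+w)-4*a by linarith)]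
    set u := Real.sqrt (6*A) with hudef
    have hu0 : 0 < u := Real.sqrt_pos.2 (by linarith)
    have hu2 : u^2 = 6*A := Real.sq_sqrt (by linarith)
    have h3a : 2*u ≤ 3*a + 2*b := by nlinarith [sq_nonneg (3*a-u), hu2, ha, hab]
    have huv : 2*B ≤ u*v := by
      nlinarith [hu2, hv2, mul_nonneg hB.le (sub_nonneg.2 hB2A),
        (show (0:ℝ) < 2*B + u*v by positivity)]
    have h3 : 24*(A+B) ≤ (2*u+2*v)^2 := by nlinarith [hu2, hv2, huv]
    refine h3.trans (pow_le_pow_left₀ (by positivity) (by linarith) 2)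

theorem dbLeafIIb (A B a b s f : ℝ) (hA:0<A) (hB:0<B) (hA2B:A≤2*B) (hB2A:B≤2*A)
    (ha:0<a) (hb:0<b) (hf:0<f) (hs:0<s) (hfs:f ≤ s) (hab:a*b=A) (haf:a*f≤B) :
    24*(A+B) ≤ (3*a+2*b+s+f+2*(B-a*f)/s)^2 := by
  set g := B - a*f with hgdef
  have hg : 0 ≤ g := by simp only [hgdef]; linarith
  rcases le_total (f^2) (2*g) with hcase | hcase
  · set w := Real.sqrt (2*g) with hwdef
    have hw0 : 0 ≤ w := Real.sqrt_nonneg _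
    have hw2 : w^2 = 2*g := Real.sq_sqrt (by linarith)
    have hfw : f ≤ w := by nlinarith
    have hs2 : 2*w ≤ s + 2*g/s := by
      rw [← sub_nonneg]
      have : s + 2*g/s - 2*w = ((s-w)^2 + (2*g - w^2))/s := by field_simp; ring
      rw [this]
      apply div_nonneg _ hs.le
      nlinarith [sq_nonneg (s-w)]
    have h2 := dbSubIIb2 A B a b f w hA hB hB2A ha hb hf.le hw0 hfw hab
      (by rw [hw2, hgdef]; ring)
    refine h2.trans (pow_le_pow_left₀ (by positivity) (by linarith) 2)
  · have hs2 : f + 2*g/f ≤ s + 2*g/s := by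
      rw [← sub_nonneg]
      have : s + 2*g/s - (f + 2*g/f) = ((s-f)*(f*s-2*g))/(f*s) := by field_simp; ring
      rw [this]
      apply div_nonneg _ (by positivity)
      apply mul_nonneg (by linarith)
      nlinarith [mul_le_mul_of_nonneg_left hfs hf.le]
    have hred : 3*a+2*b+f+(f+2*g/f) = a + 2*b + 2*f + 2*B/f := by
      rw [hgdef]; field_simp; ring
    have hkey : 24*(A+B) ≤ (a + 2*b + 2*f + 2*B/f)^2 := by
      rcases le_total (a^2) B with hc2 | hc2
      · set v := Real.sqrt B with hvdef
        have hv0 : 0 < v := Real.sqrt_pos.2 hB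
        have hv2 : v^2 = B := Real.sq_sqrt hB.le
        have hav : a ≤ v := by nlinarith
        have h1 : 4*v ≤ 2*f + 2*B/f := by
          rw [← sub_nonneg]
          have : 2*f + 2*B/f - 4*v = (2*(f-v)^2 + 2*(B - v^2))/f := by field_simp; ring
          rw [this]
          apply div_nonneg _ hf.le
          nlinarith [sq_nonneg (f-v)]
        have h2 : v + 2*A/v ≤ a + 2*b := by
          have hba : b = A/a := by field_simp [hab.symm]; linear_combination hab
          rw [hba, ← sub_nonneg]
          have : a + 2*(A/a) - (v + 2*A/v) = ((v-a)*(2*A - a*v))/(a*v) := by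
            field_simp; ring
          rw [this]
          apply div_nonneg _ (by positivity)
          apply mul_nonneg (by linarith)
          nlinarith
        have h3 : 24*(A+B) ≤ (v + 2*A/v + 4*v)^2 := by
          have : v + 2*A/v + 4*v = (2*A + 5*v^2)/v := by field_simp; ring
          rw [this, div_pow, le_div_iff₀ (by positivity)]
          nlinarith [sq_nonneg (2*A - B), hv2]
        refine h3.trans (pow_le_pow_left₀ (by positivity) (by linarith) 2)
      · have hfa : f ≤ B/a := by rw [le_div_iff₀ ha]; nlinarith
        have hfa2 : f ≤ a := by
          refine hfa.trans ?_
          rw [div_le_iff₀ ha]; nlinarith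
        have h1 : 2*(B/a) + 2*a ≤ 2*f + 2*B/f := by
          rw [← sub_nonneg]
          have : 2*f + 2*B/f - (2*(B/a) + 2*a) = (2*(B/a - f)*(B - f*(B/a)))/(f*(B/a)) := by
            field_simp; ring
          rw [this]
          apply div_nonneg _ (by positivity)
          apply mul_nonneg (by linarith)
          have : f*(B/a) ≤ B := by
            rw [mul_div_assoc', div_le_iff₀ ha]
            nlinarith [mul_le_mul_of_nonneg_right hfa2 hB.le]
          linarith
        have h2 : 24*(A+B) ≤ (3*a + 2*b + 2*(B/a))^2 := by
          have hba : b = A/a := by field_simp [hab.symm]; linear_combination hab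
          rw [hba]
          have : 3*a + 2*(A/a) + 2*(B/a) = (3*a^2 + 2*(A+B))/a := by field_simp; ring
          rw [this, div_pow, le_div_iff₀ (by positivity)]
          nlinarith [sq_nonneg (3*a^2 - 2*(A+B))]
        refine h2.trans (pow_le_pow_left₀ (by positivity) (by linarith) 2)
    calc 24*(A+B) ≤ (a + 2*b + 2*f + 2*B/f)^2 := hkey
      _ ≤ (3*a+2*b+s+f+2*(B-a*f)/s)^2 := by
          apply pow_le_pow_left₀ (by positivity)
          have h' : a + 2*b + 2*f + 2*B/f ≤ 3*a+2*b+f+(f+2*g/f) := le_of_eq hred.symm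
          rw [← hgdef]
          linarith [hs2]

theorem dbMaster (A B a b c d e f : ℝ) (hA:0<A) (hB:0<B) (hA2B:A≤2*B) (hB2A:B≤2*A)
    (ha:0<a) (hb:0<b) (hc:0≤c) (hd:0≤d) (he:0≤e) (hf:0≤f) (hdb:d≤b) (hea:e≤a)
    (hab:a*b=A) (harea:c*d+c*f+e*f=B) :
    24*(A+B) ≤ (2*(a+b+c+f)+(d+e))^2 := by
  rcases le_total f d with hfd | hdf
  · -- Case I : f ≤ d
    have hs : 0 < d + f := by
      rcases lt_or_ge 0 (d+f) with h | h
      · exact h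
      · exfalso
        have hd0 : d = 0 := by linarith
        have hf0 : f = 0 := by linarith
        rw [hd0, hf0] at harea; simp at harea; linarith
    have hCs : B ≤ (c+e/2)*(d+f) := by
      nlinarith [mul_nonneg he (sub_nonneg.2 hfd)]
    rcases le_total (d+f) b with hsb | hbs
    · have h := dbLeafIa A B a b (c+e/2) (d+f) hA hB hA2B ha hb (by linarith) hs hsb hab hCs
      refine h.trans (pow_le_pow_left₀ (by linarith) (by linarith) 2)
    · have h := dbLeafIb A B a b (c+e/2) (d+f) hA hB hB2A ha hb (by linarith) hs hbs hab hCs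
      refine h.trans (pow_le_pow_left₀ (by linarith) (by linarith) 2)
  · -- Case II : d ≤ f
    have hf0 : 0 < f := by
      rcases lt_or_ge 0 f with h | h
      · exact h
      · exfalso
        have hf' : f = 0 := by linarith
        have hd0 : d = 0 := by linarith
        rw [hf', hd0] at harea; simp at harea; linarith
    rcases le_total B (a*f) with haf | haf
    · have hBf : B ≤ (2*c+e)*f := by
        nlinarith [mul_nonneg hc (sub_nonneg.2 hdf)]
      have hdivf : B/f ≤ 2*c+e := by rw [div_le_iff₀ hf0]; linarith
      have h := dbLeafIIa A B a b f hA hB hA2B ha hb hf0 hab haf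
      refine h.trans (pow_le_pow_left₀ (by positivity) (by linarith) 2)
    · have hs : 0 < d + f := by linarith
      have hcs : c*(d+f) + e*f = B := by nlinarith [harea]
      have hef : e*f ≤ a*f := mul_le_mul_of_nonneg_right hea hf
      have hce : a + 2*(B-a*f)/(d+f) ≤ 2*c + e := by
        have h1 : (a + 2*(B-a*f)/(d+f)) * ((d+f)*f) ≤ (2*c+e) * ((d+f)*f) := by
          have expand : (a + 2*(B-a*f)/(d+f)) * ((d+f)*f) = a*(d+f)*f + 2*(B-a*f)*f := by
            field_simp
          rw [expand]
          nlinarith [mul_nonneg (show (0:ℝ) ≤ 2*f-(d+f) by linarith)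
            (show (0:ℝ) ≤ c*(d+f)-(B-a*f) by nlinarith [hef]), hcs]
        exact le_of_mul_le_mul_right h1 (by positivity)
      have h := dbLeafIIb A B a b (d+f) f hA hB hA2B hB2A ha hb hf0 hs (by linarith) hab haf
      refine h.trans (pow_le_pow_left₀ ?_ (by linarith [hce]) 2)
      have : 0 ≤ 2*(B-a*f)/(d+f) := div_nonneg (by linarith) hs.le
      linarith

/-- A general configuration for `α` (Figure 3 of the paper). -/
def IsGeneralConfig (α a b c d e f : ℝ) : Prop :=
  0 < a ∧ 0 < b ∧ 0 ≤ c ∧ 0 ≤ d ∧ 0 ≤ e ∧ 0 ≤ f ∧ d ≤ b ∧ e ≤ a ∧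
    ((a * b = 1 ∧ c * d + c * f + e * f = α) ∨
      (a * b = α ∧ c * d + c * f + e * f = 1))

theorem general_case_attained_high (α : ℝ) (h0 : 1 / 2 ≤ α) (h1 : α ≤ 1) :
    IsGeneralConfig α (Real.sqrt (3 / (2 * (1 + α)))) (Real.sqrt (2 * (1 + α) / 3))
        (α * Real.sqrt (3 / (2 * (1 + α)))) (Real.sqrt (2 * (1 + α) / 3)) 0 0 ∧
      2 * (Real.sqrt (3 / (2 * (1 + α))) + Real.sqrt (2 * (1 + α) / 3) +
            α * Real.sqrt (3 / (2 * (1 + α))) + 0) + (Real.sqrt (2 * (1 + α) / 3) + 0) =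
        2 * Real.sqrt (6 * (1 + α)) ∧
      ∀ a b c d e f : ℝ, IsGeneralConfig α a b c d e f →
        2 * Real.sqrt (6 * (1 + α)) ≤ 2 * (a + b + c + f) + (d + e) := by
  have hu : (0:ℝ) < 1 + α := by linarith
  have hu2 : (0:ℝ) < 2*(1+α) := by linarith
  have ha0 : 0 < Real.sqrt (3 / (2 * (1 + α))) := Real.sqrt_pos.2 (by positivity)
  have hb0 : 0 < Real.sqrt (2 * (1 + α) / 3) := Real.sqrt_pos.2 (by positivity)
  have hab1 : Real.sqrt (3 / (2 * (1 + α))) * Real.sqrt (2 * (1 + α) / 3) = 1 := by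
    rw [← Real.sqrt_mul (by positivity)]
    rw [show 3 / (2 * (1 + α)) * (2 * (1 + α) / 3) = 1 by field_simp]
    exact Real.sqrt_one
  have fact2 : Real.sqrt (6*(1+α)) = 2*(1+α) * Real.sqrt (3 / (2 * (1 + α))) := by
    rw [show (6*(1+α)) = (2*(1+α))^2 * (3/(2*(1+α))) by field_simp; ring]
    rw [Real.sqrt_mul (sq_nonneg _), Real.sqrt_sq (by linarith)]
  have fact3 : Real.sqrt (6*(1+α)) = 3 * Real.sqrt (2*(1+α)/3) := by
    rw [show (6*(1+α)) = (3:ℝ)^2 * (2*(1+α)/3) by ring]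
    rw [Real.sqrt_mul (by norm_num), Real.sqrt_sq (by norm_num)]
  refine ⟨⟨ha0, hb0, by positivity, hb0.le, le_refl 0, le_refl 0, le_refl _, ha0.le, ?_⟩, ?_, ?_⟩
  · left
    constructor
    · exact hab1
    · have : α * Real.sqrt (3 / (2 * (1 + α))) * Real.sqrt (2 * (1 + α) / 3) = α := by
        rw [mul_assoc, hab1, mul_one]
      simpa using this
  · linear_combination -fact2 - fact3
  · intro a b c d e f hcfg
    obtain ⟨ha, hb, hc, hd, he, hf, hdb, hea, hor⟩ := hcfg
    have hP0 : 0 ≤ 2*(a+b+c+f)+(d+e) := by linarith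
    have h24 : 24*(1+α) ≤ (2*(a+b+c+f)+(d+e))^2 := by
      rcases hor with ⟨hab, harea⟩ | ⟨hab, harea⟩
      · have := dbMaster 1 α a b c d e f (by norm_num) (by linarith) (by linarith)
          (by linarith) ha hb hc hd he hf hdb hea hab harea
        linarith
      · have := dbMaster α 1 a b c d e f (by linarith) (by norm_num) (by linarith)
          (by linarith) ha hb hc hd he hf hdb hea hab harea
        linarith
    have hsq : Real.sqrt (24*(1+α)) ≤ 2*(a+b+c+f)+(d+e) := by
      have h := Real.sqrt_le_sqrt h24
      rwa [Real.sqrt_sq hP0] at h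
    have h2s : Real.sqrt (24*(1+α)) = 2 * Real.sqrt (6*(1+α)) := by
      rw [show (24:ℝ)*(1+α) = (2:ℝ)^2 * (6*(1+α)) by ring]
      rw [Real.sqrt_mul (by norm_num), Real.sqrt_sq (by norm_num)]
    linarith [h2s ▸ hsq]
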